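/- At the critical fugacity z_n = 1, the variance of the walk length of the self-avoiding walk on K_n satisfies var_{n,1}(L_n) ~ (1 − 2/π)·n as n → ∞. -/

import Mathlib

set_option maxHeartbeats 1000000


open Filter Finset Real Asymptotics
open Topology MeasureTheory

/-- Number of `k`-step SAWs weight: `(z/n)^k` times the number of walks. -/
noncomputable def sawWeight (n : ℕ) (z : ℝ) (k : ℕ) : ℝ :=
  (z / n) ^ k * ((n - 1).descFactorial k)

/-- Partition function of the variable-length SAW model on `K_n`. -/
noncomputable def sawZ (n : ℕ) (z : ℝ) : ℝ := ∑ k ∈ Finset.range n, sawWeight n z k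

/-- Probability that the walk length equals `k`. -/
noncomputable def sawProb (n : ℕ) (z : ℝ) (k : ℕ) : ℝ := sawWeight n z k / sawZ n z

/-- Mean walk length. -/
noncomputable def sawMean (n : ℕ) (z : ℝ) : ℝ := ∑ k ∈ Finset.range n, (k : ℝ) * sawProb n z k

/-- Variance of the walk length. -/
noncomputable def sawVar (n : ℕ) (z : ℝ) : ℝ :=
  (∑ k ∈ Finset.range n, (k : ℝ) ^ 2 * sawProb n z k) - (sawMean n z) ^ 2

/-- Tail distribution `P(L_n > x)` for real `x`. -/
noncomputable def sawTail (n : ℕ) (z : ℝ) (x : ℝ) : ℝ :=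
  ∑ k ∈ Finset.range n, if x < (k : ℝ) then sawProb n z k else 0

/-- Regularised incomplete gamma function at integer first argument,
    `Q(n, ν) = e^{-ν} ∑_{j<n} ν^j/j!`. -/
noncomputable def Qreg (n : ℕ) (ν : ℝ) : ℝ :=
  Real.exp (-ν) * ∑ j ∈ Finset.range n, ν ^ j / (Nat.factorial j)

/-- `H_n(ν) = Γ(n) Q(n,ν) / (ν^n e^{-ν})`. -/
noncomputable def Hfun (n : ℕ) (ν : ℝ) : ℝ :=
  Real.Gamma n * Qreg n ν / (ν ^ n * Real.exp (-ν))

/-- Standard normal density. -/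
noncomputable def normpdf (x : ℝ) : ℝ := Real.exp (-x ^ 2 / 2) / Real.sqrt (2 * Real.pi)

/-- Standard normal tail distribution `Φ̄`. -/
noncomputable def normTail (x : ℝ) : ℝ := ∫ t in Set.Ioi x, normpdf t

/-- `η(λ) = sgn(λ-1) √(2(λ-1-log λ))`. -/
noncomputable def etaF (l : ℝ) : ℝ := Real.sign (l - 1) * Real.sqrt (2 * (l - 1 - Real.log l))

/-- `Γ*(n) = √(n/(2π)) e^n n^{-n} Γ(n)`. -/
noncomputable def gammaStar (n : ℕ) : ℝ :=
  Real.sqrt (n / (2 * Real.pi)) * Real.exp n * ((n : ℝ) ^ n)⁻¹ * Real.Gamma n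

/-- The operator `(ν d/dν)^l`. -/
noncomputable def thetaOp : ℕ → (ℝ → ℝ) → (ℝ → ℝ)
  | 0, f => f
  | (l + 1), f => fun ν => ν * deriv (thetaOp l f) ν

lemma sawWeight_nonneg (n k : ℕ) : 0 ≤ sawWeight n 1 k := by
  unfold sawWeight; positivity

lemma sawWeight_zero' (n : ℕ) : sawWeight n 1 0 = 1 := by simp [sawWeight]

lemma sawWeight_eq_zero {n k : ℕ} (hn : 1 ≤ n) (h : n ≤ k) : sawWeight n 1 k = 0 := by
  have : (n - 1).descFactorial k = 0 := Nat.descFactorial_eq_zero_iff_lt.mpr (by omega)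
  simp [sawWeight, this]

lemma sawZ_pos {n : ℕ} (hn : 1 ≤ n) : 0 < sawZ n 1 := by
  have h0 : (0:ℕ) ∈ Finset.range n := Finset.mem_range.mpr hn
  have := Finset.single_le_sum (f := sawWeight n 1) (fun k _ => sawWeight_nonneg n k) h0
  rw [sawWeight_zero'] at this
  unfold sawZ; linarith

lemma saw_rec {n : ℕ} (hn : 1 ≤ n) (k : ℕ) :
    (n : ℝ) * sawWeight n 1 (k + 1) = ((n : ℝ) - 1 - k) * sawWeight n 1 k := by
  rcases lt_or_ge k n with hk | hk
  · have hc : ((n - 1 - k : ℕ) : ℝ) = (n : ℝ) - 1 - k := by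
      have : k ≤ n - 1 := by omega
      push_cast [Nat.cast_sub this, Nat.cast_sub hn]
      ring
    have hd : (((n - 1).descFactorial (k + 1) : ℕ) : ℝ)
        = ((n : ℝ) - 1 - k) * ((n - 1).descFactorial k : ℕ) := by
      rw [Nat.descFactorial_succ, Nat.cast_mul, hc]
    have hn0 : (n : ℝ) ≠ 0 := by positivity
    unfold sawWeight
    rw [hd]
    rw [pow_succ]
    have h1n : (n : ℝ) * (1 / n) = 1 := by field_simp
    linear_combination ((1 / (n : ℝ)) ^ k * (((n : ℝ) - 1 - k) * ((n - 1).descFactorial k : ℕ))) * h1n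
  · rw [sawWeight_eq_zero hn (le_trans hk (Nat.le_succ _)), sawWeight_eq_zero hn hk]
    ring

lemma saw_shift_sum {n : ℕ} (hn : 1 ≤ n) :
    ∑ k ∈ Finset.range n, sawWeight n 1 (k + 1) = sawZ n 1 - 1 := by
  have h := Finset.sum_range_succ' (sawWeight n 1) n
  have hz : sawWeight n 1 n = 0 := sawWeight_eq_zero hn le_rfl
  have h2 := Finset.sum_range_succ (sawWeight n 1) n
  rw [hz, add_zero] at h2
  rw [h2, sawWeight_zero'] at h
  unfold sawZ
  linarith

lemma saw_S1 {n : ℕ} (hn : 1 ≤ n) :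
    ∑ k ∈ Finset.range n, (k : ℝ) * sawWeight n 1 k = n - sawZ n 1 := by
  have key : ∀ k : ℕ, (k : ℝ) * sawWeight n 1 k
      = ((n : ℝ) - 1) * sawWeight n 1 k - n * sawWeight n 1 (k + 1) := by
    intro k
    have h := saw_rec hn k
    linear_combination h
  calc ∑ k ∈ Finset.range n, (k : ℝ) * sawWeight n 1 k
      = ∑ k ∈ Finset.range n, (((n : ℝ) - 1) * sawWeight n 1 k - n * sawWeight n 1 (k + 1)) :=
        Finset.sum_congr rfl fun k _ => key k
    _ = ((n : ℝ) - 1) * sawZ n 1 - n * (sawZ n 1 - 1) := by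
        rw [Finset.sum_sub_distrib, ← Finset.mul_sum, ← Finset.mul_sum, saw_shift_sum hn]
        rfl
    _ = n - sawZ n 1 := by ring

lemma saw_shift_sum1 {n : ℕ} (hn : 1 ≤ n) :
    ∑ k ∈ Finset.range n, (k : ℝ) * sawWeight n 1 (k + 1)
      = (n : ℝ) - sawZ n 1 - (sawZ n 1 - 1) := by
  have h1 : ∑ k ∈ Finset.range n, ((k : ℝ) + 1) * sawWeight n 1 (k + 1)
      = (n : ℝ) - sawZ n 1 := by
    have h := Finset.sum_range_succ' (fun k => (k : ℝ) * sawWeight n 1 k) n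
    have hz : sawWeight n 1 n = 0 := sawWeight_eq_zero hn le_rfl
    have h2 := Finset.sum_range_succ (fun k => (k : ℝ) * sawWeight n 1 k) n
    rw [hz, mul_zero, add_zero] at h2
    rw [h2, saw_S1 hn] at h
    simp only [Nat.cast_zero, zero_mul, add_zero, Nat.cast_add, Nat.cast_one] at h
    exact h.symm
  have h2 : ∑ k ∈ Finset.range n, ((k : ℝ) + 1) * sawWeight n 1 (k + 1)
      = (∑ k ∈ Finset.range n, (k : ℝ) * sawWeight n 1 (k + 1))
        + (sawZ n 1 - 1) := by
    rw [← saw_shift_sum hn, ← Finset.sum_add_distrib]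
    exact Finset.sum_congr rfl fun k _ => by ring
  linarith

lemma saw_S2 {n : ℕ} (hn : 1 ≤ n) :
    ∑ k ∈ Finset.range n, (k : ℝ) ^ 2 * sawWeight n 1 k
      = ((n : ℝ) + 1) * sawZ n 1 - 2 * n := by
  have key : ∀ k : ℕ, (k : ℝ) ^ 2 * sawWeight n 1 k
      = ((n : ℝ) - 1) * ((k : ℝ) * sawWeight n 1 k)
        - n * ((k : ℝ) * sawWeight n 1 (k + 1)) := by
    intro k
    have h := saw_rec hn k
    linear_combination (k : ℝ) * h
  calc ∑ k ∈ Finset.range n, (k : ℝ) ^ 2 * sawWeight n 1 k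
      = ∑ k ∈ Finset.range n, (((n : ℝ) - 1) * ((k : ℝ) * sawWeight n 1 k)
        - n * ((k : ℝ) * sawWeight n 1 (k + 1))) :=
        Finset.sum_congr rfl fun k _ => key k
    _ = ((n : ℝ) - 1) * ((n : ℝ) - sawZ n 1)
        - n * ((n : ℝ) - sawZ n 1 - (sawZ n 1 - 1)) := by
        rw [Finset.sum_sub_distrib, ← Finset.mul_sum, ← Finset.mul_sum, saw_S1 hn,
          saw_shift_sum1 hn]
    _ = ((n : ℝ) + 1) * sawZ n 1 - 2 * n := by ring

lemma saw_var_formula {n : ℕ} (hn : 1 ≤ n) :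
    sawVar n 1 = (n : ℝ) - (n : ℝ) ^ 2 / (sawZ n 1) ^ 2 := by
  have hZ : (sawZ n 1) ≠ 0 := ne_of_gt (sawZ_pos hn)
  have hmean : sawMean n 1 = ((n : ℝ) - sawZ n 1) / sawZ n 1 := by
    unfold sawMean sawProb
    rw [← saw_S1 hn, Finset.sum_div]
    exact Finset.sum_congr rfl fun k _ => (mul_div_assoc _ _ _).symm
  have hsq : ∑ k ∈ Finset.range n, (k : ℝ) ^ 2 * sawProb n 1 k
      = (((n : ℝ) + 1) * sawZ n 1 - 2 * n) / sawZ n 1 := by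
    unfold sawProb
    rw [← saw_S2 hn, Finset.sum_div]
    exact Finset.sum_congr rfl fun k _ => (mul_div_assoc _ _ _).symm
  unfold sawVar
  rw [hmean, hsq]
  field_simp
  ring

lemma gauss_sum (k : ℕ) : ∑ i ∈ Finset.range k, ((i : ℝ) + 1) = k * (k + 1) / 2 := by
  induction k with
  | zero => simp
  | succ k ih => rw [Finset.sum_range_succ, ih]; push_cast; ring

lemma weight_eq_prod {n k : ℕ} (hn : 1 ≤ n) (hk : k ≤ n) :
    sawWeight n 1 k = ∏ i ∈ Finset.range k, (1 - ((i : ℝ) + 1) / n) := by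
  have hn0 : (n : ℝ) ≠ 0 := by positivity
  unfold sawWeight
  rw [Nat.descFactorial_eq_prod_range, Nat.cast_prod]
  have h1 : ((1 : ℝ) / n) ^ k = ∏ _i ∈ Finset.range k, (1 / (n : ℝ)) := by
    rw [Finset.prod_const, Finset.card_range]
  rw [one_div, ← one_div, h1, ← Finset.prod_mul_distrib]
  refine Finset.prod_congr rfl fun i hi => ?_
  have hik : i < k := Finset.mem_range.1 hi
  have hcast : ((n - 1 - i : ℕ) : ℝ) = (n : ℝ) - 1 - i := by
    have h2 : i ≤ n - 1 := by omega
    push_cast [Nat.cast_sub h2, Nat.cast_sub hn]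
    ring
  rw [hcast]
  field_simp
  ring

lemma weight_le {n : ℕ} (hn : 1 ≤ n) (k : ℕ) :
    sawWeight n 1 k ≤ Real.exp (-(1 / (2 * (n : ℝ))) * (k : ℝ) ^ 2) := by
  have hn0 : (0 : ℝ) < n := by positivity
  rcases le_or_gt k n with hk | hk
  · rw [weight_eq_prod hn hk]
    have step1 : ∏ i ∈ Finset.range k, (1 - ((i : ℝ) + 1) / n)
        ≤ ∏ i ∈ Finset.range k, Real.exp (-(((i : ℝ) + 1) / n)) := by
      apply Finset.prod_le_prod
      · intro i hi
        have hik : i < k := Finset.mem_range.1 hi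
        have : ((i : ℝ) + 1) / n ≤ 1 := by
          rw [div_le_one hn0]
          have : (i : ℝ) + 1 ≤ (k : ℝ) := by exact_mod_cast hik
          have : (k : ℝ) ≤ (n : ℝ) := by exact_mod_cast hk
          linarith [(show (i : ℝ) + 1 ≤ (k : ℝ) by exact_mod_cast hik)]
        linarith
      · intro i _
        have := Real.add_one_le_exp (-(((i : ℝ) + 1) / n))
        linarith
    have step2 : ∏ i ∈ Finset.range k, Real.exp (-(((i : ℝ) + 1) / n))
        = Real.exp (∑ i ∈ Finset.range k, -(((i : ℝ) + 1) / n)) := (Real.exp_sum _ _).symm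
    have hsum : ∑ i ∈ Finset.range k, -(((i : ℝ) + 1) / n) = -((k : ℝ) * (k + 1) / 2) / n := by
      have h2 : ∑ i ∈ Finset.range k, -(((i : ℝ) + 1) / n)
          = (∑ i ∈ Finset.range k, ((i : ℝ) + 1)) * (-(1 / n)) := by
        rw [Finset.sum_mul]
        exact Finset.sum_congr rfl fun i _ => by ring
      rw [h2, gauss_sum]; ring
    have step3 : Real.exp (-((k : ℝ) * (k + 1) / 2) / n)
        ≤ Real.exp (-(1 / (2 * (n : ℝ))) * (k : ℝ) ^ 2) := by
      apply Real.exp_le_exp.2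
      have hdiff : -(1 / (2 * (n : ℝ))) * (k : ℝ) ^ 2 - (-((k : ℝ) * (k + 1) / 2) / n)
          = (k : ℝ) / (2 * n) := by field_simp; ring
      have : (0 : ℝ) ≤ (k : ℝ) / (2 * n) := by positivity
      linarith
    calc ∏ i ∈ Finset.range k, (1 - ((i : ℝ) + 1) / n)
        ≤ Real.exp (∑ i ∈ Finset.range k, -(((i : ℝ) + 1) / n)) := step2 ▸ step1
      _ = Real.exp (-((k : ℝ) * (k + 1) / 2) / n) := by rw [hsum]
      _ ≤ _ := step3
  · rw [sawWeight_eq_zero hn hk.le]; positivity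

lemma exp_le_one_sub {x : ℝ} (h0 : 0 ≤ x) (h2 : x ≤ 1 / 2) :
    Real.exp (-x - 2 * x ^ 2) ≤ 1 - x := by
  have hx1 : (0 : ℝ) < 1 - x := by linarith
  have h3 : 1 + (x + 2 * x ^ 2) ≤ Real.exp (x + 2 * x ^ 2) := by
    have := Real.add_one_le_exp (x + 2 * x ^ 2); linarith
  have h4 : Real.exp (-x - 2 * x ^ 2) = 1 / Real.exp (x + 2 * x ^ 2) := by
    rw [one_div, ← Real.exp_neg]; congr 1; ring
  have h5 : 1 ≤ (1 - x) * Real.exp (x + 2 * x ^ 2) := by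
    have h6 : 1 ≤ (1 - x) * (1 + (x + 2 * x ^ 2)) := by nlinarith
    nlinarith [mul_le_mul_of_nonneg_left h3 hx1.le]
  rw [h4, div_le_iff₀ (Real.exp_pos _)]
  linarith

lemma weight_ge {n k : ℕ} (hn : 1 ≤ n) (hk : 2 * k ≤ n) :
    Real.exp (-(1 / (2 * (n : ℝ))) * ((k : ℝ) + 1) ^ 2 - 2 * ((k : ℝ) ^ 3 / (n : ℝ) ^ 2))
      ≤ sawWeight n 1 k := by
  have hn0 : (0 : ℝ) < n := by positivity
  rw [weight_eq_prod hn (by omega)]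
  have hxle : ∀ i ∈ Finset.range k, ((i : ℝ) + 1) / n ≤ 1 / 2 := by
    intro i hi
    have hik : i < k := Finset.mem_range.1 hi
    rw [div_le_div_iff₀ hn0 (by norm_num : (0:ℝ) < 2)]
    have h1 : 2 * ((i : ℝ) + 1) ≤ 2 * (k : ℝ) := by
      have : (i : ℝ) + 1 ≤ (k : ℝ) := by exact_mod_cast hik
      linarith
    have h2 : 2 * (k : ℝ) ≤ (n : ℝ) := by exact_mod_cast hk
    linarith
  have step1 : ∏ i ∈ Finset.range k,
      Real.exp (-(((i : ℝ) + 1) / n) - 2 * (((i : ℝ) + 1) / n) ^ 2)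
      ≤ ∏ i ∈ Finset.range k, (1 - ((i : ℝ) + 1) / n) := by
    apply Finset.prod_le_prod
    · intro i _; positivity
    · intro i hi
      exact exp_le_one_sub (by positivity) (hxle i hi)
  have step2 : ∏ i ∈ Finset.range k,
      Real.exp (-(((i : ℝ) + 1) / n) - 2 * (((i : ℝ) + 1) / n) ^ 2)
      = Real.exp (∑ i ∈ Finset.range k,
          (-(((i : ℝ) + 1) / n) - 2 * (((i : ℝ) + 1) / n) ^ 2)) := (Real.exp_sum _ _).symm
  have hsum1 : ∑ i ∈ Finset.range k, (((i : ℝ) + 1) / n) = ((k : ℝ) * (k + 1) / 2) / n := by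
    rw [← Finset.sum_div, gauss_sum]
  have hsum2 : ∑ i ∈ Finset.range k, (((i : ℝ) + 1) / n) ^ 2 ≤ (k : ℝ) ^ 3 / (n : ℝ) ^ 2 := by
    have h1 : ∀ i ∈ Finset.range k, (((i : ℝ) + 1) / n) ^ 2 ≤ (k : ℝ) ^ 2 / (n : ℝ) ^ 2 := by
      intro i hi
      have hik : i < k := Finset.mem_range.1 hi
      have h2 : (0 : ℝ) ≤ (i : ℝ) + 1 := by positivity
      have h3 : (i : ℝ) + 1 ≤ (k : ℝ) := by exact_mod_cast hik
      rw [div_pow]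
      gcongr <;> nlinarith
    calc ∑ i ∈ Finset.range k, (((i : ℝ) + 1) / n) ^ 2
        ≤ ∑ _i ∈ Finset.range k, (k : ℝ) ^ 2 / (n : ℝ) ^ 2 := Finset.sum_le_sum h1
      _ = (k : ℝ) * ((k : ℝ) ^ 2 / (n : ℝ) ^ 2) := by
          rw [Finset.sum_const, Finset.card_range, nsmul_eq_mul]
      _ = (k : ℝ) ^ 3 / (n : ℝ) ^ 2 := by ring
  have hsum : -(1 / (2 * (n : ℝ))) * ((k : ℝ) + 1) ^ 2 - 2 * ((k : ℝ) ^ 3 / (n : ℝ) ^ 2)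
      ≤ ∑ i ∈ Finset.range k, (-(((i : ℝ) + 1) / n) - 2 * (((i : ℝ) + 1) / n) ^ 2) := by
    have hsplit : ∑ i ∈ Finset.range k,
        (-(((i : ℝ) + 1) / n) - 2 * (((i : ℝ) + 1) / n) ^ 2)
        = -(∑ i ∈ Finset.range k, (((i : ℝ) + 1) / n))
          - 2 * ∑ i ∈ Finset.range k, (((i : ℝ) + 1) / n) ^ 2 := by
      rw [Finset.sum_sub_distrib, ← Finset.sum_neg_distrib, ← Finset.mul_sum]
    rw [hsplit, hsum1]
    have hq : ((k : ℝ) * (k + 1) / 2) / n ≤ (1 / (2 * (n : ℝ))) * ((k : ℝ) + 1) ^ 2 := by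
      have hdiff : (1 / (2 * (n : ℝ))) * ((k : ℝ) + 1) ^ 2 - ((k : ℝ) * (k + 1) / 2) / n
          = ((k : ℝ) + 1) / (2 * n) := by field_simp; ring
      have : (0 : ℝ) ≤ ((k : ℝ) + 1) / (2 * n) := by positivity
      linarith
    linarith
  calc Real.exp (-(1 / (2 * (n : ℝ))) * ((k : ℝ) + 1) ^ 2 - 2 * ((k : ℝ) ^ 3 / (n : ℝ) ^ 2))
      ≤ Real.exp (∑ i ∈ Finset.range k,
          (-(((i : ℝ) + 1) / n) - 2 * (((i : ℝ) + 1) / n) ^ 2)) := Real.exp_le_exp.2 hsum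
    _ ≤ _ := step2 ▸ step1

open MeasureTheory in
lemma gauss_antitoneOn {b : ℝ} (hb : 0 ≤ b) :
    AntitoneOn (fun x : ℝ => Real.exp (-b * x ^ 2)) (Set.Ici 0) := by
  intro x hx y hy hxy
  simp only
  apply Real.exp_le_exp.2
  have hx0 : (0 : ℝ) ≤ x := hx
  nlinarith [mul_le_mul hxy hxy hx0 (le_trans hx0 hxy)]

open MeasureTheory in
lemma gauss_halfint {n : ℕ} (hn : 1 ≤ n) :
    ∫ x in Set.Ioi (0 : ℝ), Real.exp (-(1 / (2 * (n : ℝ))) * x ^ 2)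
      = Real.sqrt (Real.pi / 2) * Real.sqrt n := by
  have hn0 : (0 : ℝ) < n := by exact_mod_cast hn
  rw [integral_gaussian_Ioi (1 / (2 * (n : ℝ)))]
  have e1 : Real.pi / (1 / (2 * (n : ℝ))) = (Real.pi / 2) * (2 * Real.sqrt n) ^ 2 := by
    rw [mul_pow, Real.sq_sqrt hn0.le]
    field_simp
  rw [e1, Real.sqrt_mul (by positivity), Real.sqrt_sq (by positivity)]
  ring

open MeasureTheory in
lemma sawZ_le {n : ℕ} (hn : 1 ≤ n) :
    sawZ n 1 ≤ 1 + Real.sqrt (Real.pi / 2) * Real.sqrt n := by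
  have hn0 : (0 : ℝ) < n := by exact_mod_cast hn
  have hb : (0 : ℝ) < 1 / (2 * (n : ℝ)) := by positivity
  set g : ℝ → ℝ := fun x => Real.exp (-(1 / (2 * (n : ℝ))) * x ^ 2) with hg
  have hanti : AntitoneOn g (Set.Icc 0 (0 + ((n - 1 : ℕ) : ℝ))) :=
    (gauss_antitoneOn hb.le).mono (fun x hx => hx.1)
  have key := hanti.sum_le_integral
  -- Z = w 0 + ∑_{i<n-1} w (i+1)
  have hsplit : sawZ n 1 = 1 + ∑ i ∈ Finset.range (n - 1), sawWeight n 1 (i + 1) := by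
    have h := Finset.sum_range_succ' (sawWeight n 1) (n - 1)
    rw [sawWeight_zero', show n - 1 + 1 = n from by omega] at h
    unfold sawZ
    rw [h]; ring
  have hterm : ∀ i ∈ Finset.range (n - 1),
      sawWeight n 1 (i + 1) ≤ g ((0 : ℝ) + ((i + 1 : ℕ) : ℝ)) := by
    intro i _
    have := weight_le hn (i + 1)
    simpa [hg] using this
  have h1 : ∑ i ∈ Finset.range (n - 1), sawWeight n 1 (i + 1)
      ≤ ∑ i ∈ Finset.range (n - 1), g ((0 : ℝ) + ((i + 1 : ℕ) : ℝ)) :=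
    Finset.sum_le_sum hterm
  have h2 : (∫ x in (0 : ℝ)..((0 : ℝ) + ((n - 1 : ℕ) : ℝ)), g x)
      ≤ ∫ x in Set.Ioi (0 : ℝ), g x := by
    have ha : (0 : ℝ) ≤ (0 : ℝ) + ((n - 1 : ℕ) : ℝ) := by positivity
    rw [intervalIntegral.integral_of_le ha]
    apply setIntegral_mono_set ((integrable_exp_neg_mul_sq hb).integrableOn)
      (ae_of_all _ fun x => (Real.exp_pos _).le)
    exact (Set.Ioc_subset_Ioi_self).eventuallyLE
  rw [hsplit]
  have h3 := gauss_halfint hn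
  have : (∫ x in Set.Ioi (0:ℝ), g x) = Real.sqrt (Real.pi / 2) * Real.sqrt n := h3
  linarith [le_trans h1 (le_trans key h2)]

open MeasureTheory in
lemma sawZ_ge {m n : ℕ} (hm : 1 ≤ m) (hn : 16 * m ^ 2 ≤ n) :
    Real.exp (-(2 * (m : ℝ) ^ 3 / Real.sqrt n)) *
      (Real.sqrt (Real.pi / 2) * Real.sqrt n
        - (1 + 4 * Real.sqrt n * Real.exp (-((m : ℝ) ^ 2 / 8))))
      ≤ sawZ n 1 := by
  have hn16 : 16 ≤ n := by nlinarith
  have hn1 : 1 ≤ n := by omega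
  have hn0 : (0 : ℝ) < n := by exact_mod_cast hn1
  have hb : (0 : ℝ) < 1 / (2 * (n : ℝ)) := by positivity
  set r : ℝ := Real.sqrt n with hr
  have hr2 : r ^ 2 = n := Real.sq_sqrt hn0.le
  have hr4 : 4 ≤ r := by
    rw [hr, show (4 : ℝ) = Real.sqrt 16 by
      rw [show (16 : ℝ) = 4 ^ 2 by norm_num, Real.sqrt_sq]; norm_num]
    exact Real.sqrt_le_sqrt (by exact_mod_cast hn16)
  have hr0 : 0 < r := by linarith
  set s : ℕ := Nat.sqrt n with hs
  set K : ℕ := m * s with hK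
  have hsle : (s : ℝ) ≤ r := Real.nat_sqrt_le_real_sqrt
  have hsge : r - 1 ≤ (s : ℝ) := by
    have := Real.real_sqrt_le_nat_sqrt_succ (a := n)
    push_cast at this ⊢
    linarith
  have hsge2 : r / 2 ≤ (s : ℝ) := by linarith
  have hKle : (K : ℝ) ≤ (m : ℝ) * r := by
    rw [hK]; push_cast
    exact mul_le_mul_of_nonneg_left hsle (by positivity)
  have hm0 : (1 : ℝ) ≤ (m : ℝ) := by exact_mod_cast hm
  have hKge : (m : ℝ) * r / 2 ≤ (K : ℝ) := by
    rw [hK]; push_cast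
    calc (m : ℝ) * r / 2 = (m : ℝ) * (r / 2) := by ring
      _ ≤ (m : ℝ) * s := mul_le_mul_of_nonneg_left hsge2 (by positivity)
  have hK2n : 2 * K ≤ n := by
    have h1 : ((2 * K : ℕ) : ℝ) ≤ 2 * (m : ℝ) * r := by push_cast; linarith [hKle]
    have h2 : 2 * (m : ℝ) * r ≤ n := by
      have h3 : 4 * (m : ℝ) ≤ r := by
        have : 16 * (m : ℝ) ^ 2 ≤ n := by exact_mod_cast hn
        nlinarith [hr2, hr0, hm0]
      nlinarith [hr2, hr0]
    exact_mod_cast le_trans h1 h2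
  have hK1 : 1 ≤ K := by
    have hs1 : 1 ≤ s := by
      have : Nat.sqrt 16 ≤ Nat.sqrt n := Nat.sqrt_le_sqrt hn16
      have h16 : Nat.sqrt 16 = 4 := by norm_num [Nat.sqrt]
      omega
    calc 1 = 1 * 1 := rfl
      _ ≤ m * s := Nat.mul_le_mul hm hs1
  have hKn : K + 1 ≤ n := by omega
  set g : ℝ → ℝ := fun x => Real.exp (-(1 / (2 * (n : ℝ))) * x ^ 2) with hg
  set c : ℝ := 2 * (m : ℝ) ^ 3 / r with hc
  have hgpos : ∀ x : ℝ, 0 < g x := fun x => Real.exp_pos _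
  -- Step (A): restrict sum
  have hA : ∑ k ∈ Finset.range (K + 1), sawWeight n 1 k ≤ sawZ n 1 := by
    unfold sawZ
    apply Finset.sum_le_sum_of_subset_of_nonneg
    · exact Finset.range_subset_range.2 hKn
    · exact fun k _ _ => sawWeight_nonneg n k
  -- Step (B): per-term lower bound
  have hB : ∀ k ∈ Finset.range (K + 1),
      Real.exp (-c) * g ((1 : ℝ) + (k : ℝ)) ≤ sawWeight n 1 k := by
    intro k hk
    have hkK : k ≤ K := by have := Finset.mem_range.1 hk; omega
    have h2k : 2 * k ≤ n := le_trans (by omega) hK2n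
    have hW := weight_ge hn1 h2k
    have htail : 2 * ((k : ℝ) ^ 3 / (n : ℝ) ^ 2) ≤ c := by
      have hkr : (k : ℝ) ≤ (m : ℝ) * r := le_trans (by exact_mod_cast hkK) hKle
      have hk0 : (0 : ℝ) ≤ k := by positivity
      have h3 : (k : ℝ) ^ 3 ≤ (m : ℝ) ^ 3 * r ^ 3 := by
        calc (k : ℝ) ^ 3 ≤ ((m : ℝ) * r) ^ 3 := pow_le_pow_left₀ hk0 hkr 3
          _ = (m : ℝ) ^ 3 * r ^ 3 := by ring
      have h4 : (n : ℝ) ^ 2 = r ^ 4 := by rw [← hr2]; ring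
      rw [hc, show 2 * ((k : ℝ) ^ 3 / (n : ℝ) ^ 2) = (2 * (k : ℝ) ^ 3) / (n : ℝ) ^ 2 from by
        ring, h4, div_le_div_iff₀ (by positivity) hr0]
      nlinarith [mul_le_mul_of_nonneg_right h3 hr0.le, hr0]
    calc Real.exp (-c) * g ((1 : ℝ) + (k : ℝ))
        = Real.exp (-(1 / (2 * (n : ℝ))) * ((k : ℝ) + 1) ^ 2 + (-c)) := by
          rw [hg]; rw [← Real.exp_add]; ring_nf
      _ ≤ Real.exp (-(1 / (2 * (n : ℝ))) * ((k : ℝ) + 1) ^ 2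
            - 2 * ((k : ℝ) ^ 3 / (n : ℝ) ^ 2)) := by
          apply Real.exp_le_exp.2; linarith
      _ ≤ sawWeight n 1 k := hW
  -- Step (C): integral below sum
  have hanti : AntitoneOn g (Set.Icc 1 ((1 : ℝ) + ((K + 1 : ℕ) : ℝ))) :=
    (gauss_antitoneOn hb.le).mono (fun x hx => le_trans zero_le_one hx.1)
  have hC := hanti.integral_le_sum
  -- (x₀ = 1, a = K+1) : ∫ x in 1..1+(K+1), g ≤ ∑_{i<K+1} g (1 + i)
  set A : ℝ := (1 : ℝ) + ((K + 1 : ℕ) : ℝ) with hA'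
  have hA1 : 1 ≤ A := by rw [hA']; push_cast; linarith [Nat.cast_nonneg (α := ℝ) K]
  have hAK : (K : ℝ) ≤ A := by rw [hA']; push_cast; linarith
  -- Step (D): split ∫_{Ioi 0} = ∫_{Ioc 0 1} + ∫_{Ioc 1 A} + ∫_{Ioi A}
  have hint : ∀ (S : Set ℝ), IntegrableOn g S volume :=
    fun S => (integrable_exp_neg_mul_sq hb).integrableOn
  have hD1 : (∫ x in Set.Ioi (0 : ℝ), g x)
      = (∫ x in Set.Ioc (0 : ℝ) 1, g x) + ∫ x in Set.Ioi (1 : ℝ), g x := by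
    rw [← setIntegral_union (Set.Ioc_disjoint_Ioi le_rfl) measurableSet_Ioi (hint _) (hint _),
      Set.Ioc_union_Ioi_eq_Ioi zero_le_one]
  have hD2 : (∫ x in Set.Ioi (1 : ℝ), g x)
      = (∫ x in Set.Ioc (1 : ℝ) A, g x) + ∫ x in Set.Ioi A, g x := by
    rw [← setIntegral_union (Set.Ioc_disjoint_Ioi le_rfl) measurableSet_Ioi (hint _) (hint _),
      Set.Ioc_union_Ioi_eq_Ioi hA1]
  have hD3 : (∫ x in Set.Ioc (0 : ℝ) 1, g x) ≤ 1 := by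
    calc (∫ x in Set.Ioc (0 : ℝ) 1, g x) ≤ ∫ _x in Set.Ioc (0 : ℝ) 1, (1 : ℝ) := by
          apply setIntegral_mono_on (hint _) (integrableOn_const (by simp))
            measurableSet_Ioc
          intro x _
          rw [hg]
          simp only
          rw [Real.exp_le_one_iff]
          nlinarith [sq_nonneg x, hn0]
      _ = 1 := by simp
  -- Step (E): tail bound
  have hKposR : (0 : ℝ) < (K : ℝ) := by exact_mod_cast hK1
  have hcK : (0 : ℝ) < (K : ℝ) / (2 * n) := by positivity
  have hE : (∫ x in Set.Ioi A, g x) ≤ 4 * r * Real.exp (-((m : ℝ) ^ 2 / 8)) := by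
    set cc : ℝ := (K : ℝ) / (2 * n) with hcc
    have h1 : (∫ x in Set.Ioi A, g x) ≤ ∫ x in Set.Ioi A, Real.exp (-(cc * x)) := by
      apply setIntegral_mono_on (hint _) _ measurableSet_Ioi
      · intro x hx
        have hxA : A < x := hx
        have hxK : (K : ℝ) ≤ x := by linarith
        have hx0 : (0 : ℝ) < x := by linarith
        apply Real.exp_le_exp.2
        have hdiff : -(cc * x) - (-(1 / (2 * (n : ℝ))) * x ^ 2)
            = (x * (x - K)) / (2 * n) := by
          rw [hcc]; field_simp; ring
        have hnn : 0 ≤ (x * (x - (K : ℝ))) / (2 * (n : ℝ)) :=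
          div_nonneg (mul_nonneg hx0.le (by linarith)) (by positivity)
        linarith
      · have := exp_neg_integrableOn_Ioi A hcK
        simpa [neg_mul] using this
    have h2 : (∫ x in Set.Ioi A, Real.exp (-(cc * x))) = cc⁻¹ * Real.exp (-(cc * A)) := by
      have h := integral_comp_mul_left_Ioi (fun x => Real.exp (-x)) A hcK
      simp only [smul_eq_mul] at h
      rw [h, integral_exp_neg_Ioi]
    have h3 : cc⁻¹ ≤ 4 * r := by
      rw [hcc, inv_div, div_le_iff₀ hKposR]
      nlinarith [hKge, hr0, hm0, hr2]
    have h4 : Real.exp (-(cc * A)) ≤ Real.exp (-((m : ℝ) ^ 2 / 8)) := by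
      apply Real.exp_le_exp.2
      rw [neg_le_neg_iff]
      have h5 : (m : ℝ) ^ 2 / 8 ≤ cc * (K : ℝ) := by
        rw [hcc, div_mul_eq_mul_div, le_div_iff₀ (by positivity)]
        nlinarith [hKge, hr0, hm0, hr2]
      have h6 : cc * (K : ℝ) ≤ cc * A := mul_le_mul_of_nonneg_left hAK hcK.le
      exact le_trans h5 h6
    calc (∫ x in Set.Ioi A, g x) ≤ ∫ x in Set.Ioi A, Real.exp (-(cc * x)) := h1
      _ = cc⁻¹ * Real.exp (-(cc * A)) := h2
      _ ≤ 4 * r * Real.exp (-((m : ℝ) ^ 2 / 8)) :=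
          mul_le_mul h3 h4 (Real.exp_pos _).le (by positivity)
  -- Assemble
  have hsum1 : Real.exp (-c) * (∫ x in Set.Ioc (1 : ℝ) A, g x)
      ≤ ∑ k ∈ Finset.range (K + 1), sawWeight n 1 k := by
    have e1 : (∫ x in (1 : ℝ)..(1 : ℝ) + ((K + 1 : ℕ) : ℝ), g x)
        = ∫ x in Set.Ioc (1 : ℝ) A, g x := by
      rw [intervalIntegral.integral_of_le (by rw [← hA']; exact hA1)]
    have e2 : ∑ i ∈ Finset.range (K + 1), g ((1 : ℝ) + (i : ℕ))
        = ∑ i ∈ Finset.range (K + 1), g ((1 : ℝ) + (i : ℝ)) := rfl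
    have hCsum : (∫ x in Set.Ioc (1 : ℝ) A, g x)
        ≤ ∑ i ∈ Finset.range (K + 1), g ((1 : ℝ) + (i : ℝ)) := by
      rw [← e1]
      exact hC
    calc Real.exp (-c) * (∫ x in Set.Ioc (1 : ℝ) A, g x)
        ≤ Real.exp (-c) * ∑ i ∈ Finset.range (K + 1), g ((1 : ℝ) + (i : ℝ)) :=
          mul_le_mul_of_nonneg_left hCsum (Real.exp_pos _).le
      _ = ∑ i ∈ Finset.range (K + 1), Real.exp (-c) * g ((1 : ℝ) + (i : ℝ)) :=
          Finset.mul_sum _ _ _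
      _ ≤ ∑ k ∈ Finset.range (K + 1), sawWeight n 1 k := Finset.sum_le_sum hB
  have hfull : (∫ x in Set.Ioi (0 : ℝ), g x) = Real.sqrt (Real.pi / 2) * r :=
    gauss_halfint hn1
  have hmid : Real.sqrt (Real.pi / 2) * r - (1 + 4 * r * Real.exp (-((m : ℝ) ^ 2 / 8)))
      ≤ ∫ x in Set.Ioc (1 : ℝ) A, g x := by
    linarith [hD1, hD2, hD3, hE, hfull.le, hfull.ge]
  calc Real.exp (-c) *
      (Real.sqrt (Real.pi / 2) * r - (1 + 4 * r * Real.exp (-((m : ℝ) ^ 2 / 8))))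
      ≤ Real.exp (-c) * ∫ x in Set.Ioc (1 : ℝ) A, g x :=
        mul_le_mul_of_nonneg_left hmid (Real.exp_pos _).le
    _ ≤ ∑ k ∈ Finset.range (K + 1), sawWeight n 1 k := hsum1
    _ ≤ sawZ n 1 := hA

lemma sqrtn_tendsto : Tendsto (fun n : ℕ => Real.sqrt n) atTop atTop := by
  apply tendsto_atTop_atTop.2
  intro b
  refine ⟨⌈b⌉₊ ^ 2, fun n hn => ?_⟩
  have h1 : ((⌈b⌉₊ ^ 2 : ℕ) : ℝ) ≤ (n : ℝ) := by exact_mod_cast hn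
  calc b ≤ (⌈b⌉₊ : ℝ) := Nat.le_ceil b
    _ = Real.sqrt (((⌈b⌉₊ : ℝ)) ^ 2) := (Real.sqrt_sq (by positivity)).symm
    _ ≤ Real.sqrt n := Real.sqrt_le_sqrt (by push_cast at h1 ⊢; linarith)

lemma inv_sqrtn_tendsto : Tendsto (fun n : ℕ => 1 / Real.sqrt n) atTop (𝓝 0) := by
  simpa [one_div, Pi.inv_def] using sqrtn_tendsto.inv_tendsto_atTop

lemma sawZ_tendsto :
    Tendsto (fun n : ℕ => sawZ n 1 / Real.sqrt n) atTop (𝓝 (Real.sqrt (Real.pi / 2))) := by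
  rw [tendsto_order]
  constructor
  · -- lower bound side
    intro a ha
    have hlim : Tendsto (fun m : ℕ => 4 * Real.exp (-((m : ℝ) ^ 2 / 8))) atTop (𝓝 0) := by
      have h1 : Tendsto (fun m : ℕ => ((m : ℝ) ^ 2 / 8)) atTop atTop := by
        apply Filter.Tendsto.atTop_div_const (by norm_num : (0 : ℝ) < 8)
        exact (tendsto_pow_atTop (n := 2) (by norm_num)).comp tendsto_natCast_atTop_atTop
      have h2 := Real.tendsto_exp_neg_atTop_nhds_zero.comp h1
      have h3 := h2.const_mul (4 : ℝ)
      simpa using h3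
    have hgap : (0 : ℝ) < Real.sqrt (Real.pi / 2) - a := by linarith
    obtain ⟨m, hm⟩ := ((hlim.eventually (gt_mem_nhds hgap)).and (eventually_ge_atTop 1)).exists
    obtain ⟨hm2, hm1⟩ := hm
    set e : ℝ := Real.exp (-((m : ℝ) ^ 2 / 8)) with he
    set E : ℕ → ℝ := fun n => Real.exp (-(2 * (m : ℝ) ^ 3 / Real.sqrt n)) *
      (Real.sqrt (Real.pi / 2) - (1 / Real.sqrt n + 4 * e)) with hE
    have t1 : Tendsto (fun n : ℕ => Real.exp (-(2 * (m : ℝ) ^ 3 / Real.sqrt n))) atTop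
        (𝓝 1) := by
      have h4 : Tendsto (fun n : ℕ => -(2 * (m : ℝ) ^ 3 * (1 / Real.sqrt n))) atTop (𝓝 0) := by
        have := (inv_sqrtn_tendsto.const_mul (2 * (m : ℝ) ^ 3)).neg
        simpa using this
      have h5 := h4.rexp
      rw [Real.exp_zero] at h5
      apply h5.congr
      intro n
      rw [mul_one_div]
    have t2 : Tendsto (fun n : ℕ => Real.sqrt (Real.pi / 2) - (1 / Real.sqrt n + 4 * e)) atTop
        (𝓝 (Real.sqrt (Real.pi / 2) - (0 + 4 * e))) :=
      tendsto_const_nhds.sub (inv_sqrtn_tendsto.add tendsto_const_nhds)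
    have tE : Tendsto E atTop (𝓝 (Real.sqrt (Real.pi / 2) - 4 * e)) := by
      have := t1.mul t2
      rw [one_mul, zero_add] at this
      exact this
    have haE : a < Real.sqrt (Real.pi / 2) - 4 * e := by
      have : 4 * e < Real.sqrt (Real.pi / 2) - a := hm2
      linarith
    have hEgt : ∀ᶠ n : ℕ in atTop, a < E n := tE.eventually (lt_mem_nhds haE)
    have hZE : ∀ᶠ n : ℕ in atTop, E n ≤ sawZ n 1 / Real.sqrt n := by
      filter_upwards [eventually_ge_atTop (16 * m ^ 2)] with n hn
      have hn1 : 1 ≤ n := by nlinarith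
      have hn0 : (0 : ℝ) < n := by exact_mod_cast hn1
      have hrn : (0 : ℝ) < Real.sqrt n := Real.sqrt_pos.2 hn0
      rw [le_div_iff₀ hrn]
      have key := sawZ_ge hm1 hn
      calc E n * Real.sqrt n
          = Real.exp (-(2 * (m : ℝ) ^ 3 / Real.sqrt n)) *
            (Real.sqrt (Real.pi / 2) * Real.sqrt n - (1 + 4 * Real.sqrt n * e)) := by
            rw [hE]
            field_simp
        _ ≤ sawZ n 1 := key
    filter_upwards [hEgt, hZE] with n h1 h2
    exact lt_of_lt_of_le h1 h2
  · -- upper bound side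
    intro b hb
    have h1 : ∀ᶠ n : ℕ in atTop, sawZ n 1 / Real.sqrt n
        ≤ Real.sqrt (Real.pi / 2) + 1 / Real.sqrt n := by
      filter_upwards [eventually_ge_atTop 1] with n hn
      have hn0 : (0 : ℝ) < n := by exact_mod_cast hn
      have hrn : (0 : ℝ) < Real.sqrt n := Real.sqrt_pos.2 hn0
      rw [div_le_iff₀ hrn]
      calc sawZ n 1 ≤ 1 + Real.sqrt (Real.pi / 2) * Real.sqrt n := sawZ_le hn
        _ = (Real.sqrt (Real.pi / 2) + 1 / Real.sqrt n) * Real.sqrt n := by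
            field_simp
            ring
    have h2 : Tendsto (fun n : ℕ => Real.sqrt (Real.pi / 2) + 1 / Real.sqrt n) atTop
        (𝓝 (Real.sqrt (Real.pi / 2) + 0)) := tendsto_const_nhds.add inv_sqrtn_tendsto
    have h3 : ∀ᶠ n : ℕ in atTop, Real.sqrt (Real.pi / 2) + 1 / Real.sqrt n < b :=
      h2.eventually (gt_mem_nhds (by simpa using hb))
    filter_upwards [h1, h3] with n ha hc
    exact lt_of_le_of_lt ha hc

theorem var_critical :
    (fun n : ℕ => sawVar n 1) ~[atTop] (fun n : ℕ => (1 - 2 / Real.pi) * n) := by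
  have hπ : (2 : ℝ) < Real.pi := by linarith [Real.pi_gt_three]
  have hπ0 : (0 : ℝ) < Real.pi := by linarith
  have hc : (1 : ℝ) - 2 / Real.pi ≠ 0 := by
    have : 2 / Real.pi < 1 := (div_lt_one hπ0).2 hπ
    linarith
  apply Asymptotics.isEquivalent_of_tendsto_one
  · have hZ := sawZ_tendsto
    have hsq2 : Real.sqrt (Real.pi / 2) ≠ 0 := by positivity
    have h1 : Tendsto (fun n : ℕ => Real.sqrt n / sawZ n 1) atTop
        (𝓝 (Real.sqrt (Real.pi / 2))⁻¹) := by
      have := hZ.inv₀ hsq2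
      apply this.congr
      intro n
      exact (inv_div _ _)
    have h2 := h1.mul h1
    have h5 := (tendsto_const_nhds (x := (1 : ℝ)) (f := atTop)).sub h2
    have h6 := h5.mul_const ((1 - 2 / Real.pi)⁻¹)
    have hconst : ((1 : ℝ) - (Real.sqrt (Real.pi / 2))⁻¹ * (Real.sqrt (Real.pi / 2))⁻¹) *
        (1 - 2 / Real.pi)⁻¹ = 1 := by
      rw [← mul_inv, Real.mul_self_sqrt (by positivity), inv_div]
      exact mul_inv_cancel₀ hc
    rw [hconst] at h6
    apply h6.congr'
    filter_upwards [eventually_ge_atTop 1] with n hn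
    have hn0 : (0 : ℝ) < n := by exact_mod_cast hn
    have hZpos := sawZ_pos hn
    have hrr : Real.sqrt n * Real.sqrt n = (n : ℝ) := Real.mul_self_sqrt hn0.le
    have hvar := saw_var_formula hn
    show (1 - Real.sqrt n / sawZ n 1 * (Real.sqrt n / sawZ n 1)) * (1 - 2 / Real.pi)⁻¹
        = ((fun n : ℕ => sawVar n 1) / fun n : ℕ => (1 - 2 / Real.pi) * n) n
    have hpi : (Real.pi : ℝ) ≠ 0 := ne_of_gt hπ0
    simp only [Pi.div_apply]
    rw [hvar]
    rw [div_mul_div_comm, hrr]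
    have hZne : sawZ n 1 ≠ 0 := ne_of_gt hZpos
    have hπ2 : Real.pi - 2 ≠ 0 := by linarith
    have hn0' : (n : ℝ) ≠ 0 := ne_of_gt hn0
    field_simp [hπ2]
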